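/- If M₀ is an infinite-memory state (no standard path from M₀ ever reaches the identity memory state) and M is a finite-memory state, then M₀·M is an infinite-memory state. -/

import Mathlib

open scoped BigOperators

/-- The Pauli group on `j` qubits modulo its center, written additively:
an element `(a, b)` at each qubit corresponds to `X^a Z^b`. -/
abbrev Pauli (j : ℕ) := Fin j → (ZMod 2) × (ZMod 2)

/-- The standard symplectic form: two Pauli elements commute iff it vanishes. -/
def omega {j : ℕ} (v w : Pauli j) : ZMod 2 :=
  ∑ i, ((v i).1 * (w i).2 + (w i).1 * (v i).2)

/-- A quantum convolutional encoder: a symplectic automorphism taking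
(memory `m`, ancilla `s = n - k`, information `k`) to (physical `n`, memory `m`). -/
structure Encoder (m s k n : ℕ) where
  toEquiv : (Pauli m × Pauli s × Pauli k) ≃+ (Pauli n × Pauli m)
  symp : ∀ x y : Pauli m × Pauli s × Pauli k,
    omega (toEquiv x).1 (toEquiv y).1 + omega (toEquiv x).2 (toEquiv y).2
      = omega x.1 y.1 + omega x.2.1 y.2.1 + omega x.2.2 y.2.2

/-- `S ∈ {I, Z}^{⊗ s}`: the X-component vanishes. -/
def isIZ {s : ℕ} (S : Pauli s) : Prop := ∀ i, (S i).1 = 0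

/-- Pauli `Z` on the `i`-th qubit, identity elsewhere. -/
def Zi {s : ℕ} (i : Fin s) : Pauli s := fun j => (0, if j = i then 1 else 0)

/-- Pauli `X` on the `i`-th qubit, identity elsewhere. -/
def Xi {k : ℕ} (i : Fin k) : Pauli k := fun j => (if j = i then 1 else 0, 0)

/-- A standard path: at each step the ancilla input is in `{I,Z}^{⊗s}` and the
logical input is the identity. -/
def stdPath {m s k n : ℕ} (E : Encoder m s k n) (f : ℕ → Pauli m) : Prop :=
  ∀ t, ∃ (S : Pauli s) (P : Pauli n), isIZ S ∧ E.toEquiv (f t, S, 0) = (P, f (t + 1))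

/-- A finite-memory state: some standard path from it reaches the identity memory state. -/
def finiteMemory {m s k n : ℕ} (E : Encoder m s k n) (M : Pauli m) : Prop :=
  ∃ f : ℕ → Pauli m, stdPath E f ∧ f 0 = M ∧ ∃ t, f t = 0

/-- Membership in a zero physical-weight cycle. -/
def inZeroCycle {m s k n : ℕ} (E : Encoder m s k n) (M : Pauli m) : Prop :=
  ∃ (p : ℕ) (f : ℕ → Pauli m), 0 < p ∧ f 0 = M ∧ (∀ t, f (t + p) = f t) ∧
    ∀ t, ∃ (S : Pauli s) (L : Pauli k), isIZ S ∧ E.toEquiv (f t, S, L) = (0, f (t + 1))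

/-- Non-catastrophic: every edge of every zero physical-weight cycle has
identity logical label. -/
def nonCatastrophic {m s k n : ℕ} (E : Encoder m s k n) : Prop :=
  ∀ (p : ℕ) (f : ℕ → Pauli m) (S : ℕ → Pauli s) (L : ℕ → Pauli k),
    0 < p → (∀ t, f (t + p) = f t) →
    (∀ t, isIZ (S t) ∧ E.toEquiv (f t, S t, L t) = (0, f (t + 1))) →
    ∀ t, L t = 0

lemma stdPath_sub {m s k n : ℕ} (E : Encoder m s k n) {f g : ℕ → Pauli m}
    (hf : stdPath E f) (hg : stdPath E g) : stdPath E (f - g) := by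
  intro t
  obtain ⟨S₁, P₁, hS₁, hE₁⟩ := hf t
  obtain ⟨S₂, P₂, hS₂, hE₂⟩ := hg t
  refine ⟨S₁ - S₂, P₁ - P₂, fun i => ?_, ?_⟩
  · simp [Pi.sub_apply, Prod.fst_sub, hS₁ i, hS₂ i]
  · have : E.toEquiv ((f t, S₁, (0 : Pauli k)) - (g t, S₂, 0)) = (P₁, f (t + 1)) - (P₂, g (t + 1)) := by
      rw [E.toEquiv.map_sub, hE₁, hE₂]
    simpa [Prod.mk_sub_mk] using this

/-- Extend a finite-memory path so that it is eventually zero. -/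
lemma finiteMemory_ext {m s k n : ℕ} (E : Encoder m s k n) {M : Pauli m}
    (h : finiteMemory E M) :
    ∃ f : ℕ → Pauli m, stdPath E f ∧ f 0 = M ∧ ∃ t₀, ∀ u, t₀ ≤ u → f u = 0 := by
  obtain ⟨f, hf, hf0, t₀, ht₀⟩ := h
  refine ⟨fun u => if u < t₀ then f u else 0, ?_, ?_, t₀, fun u hu => by simp [Nat.not_lt.2 hu]⟩
  · intro t
    by_cases ht : t < t₀
    · obtain ⟨S, P, hS, hE⟩ := hf t
      refine ⟨S, P, hS, ?_⟩
      have h1 : (if t + 1 < t₀ then f (t + 1) else 0) = f (t + 1) := by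
        by_cases h2 : t + 1 < t₀
        · simp [h2]
        · have : t + 1 = t₀ := le_antisymm ht (Nat.not_lt.1 h2)
          simp [h2, this, ht₀]
      simp only [ht, if_pos, h1]
      exact hE
    · refine ⟨0, 0, fun i => rfl, ?_⟩
      have h2 : ¬ (t + 1 < t₀) := fun hc => ht (Nat.lt_of_succ_lt hc)
      have hz : E.toEquiv (0, 0, 0) = 0 := E.toEquiv.map_zero
      simp [ht, h2, Prod.ext_iff, hz]
  · by_cases h0 : 0 < t₀
    · simp [h0, hf0]
    · have h1 : t₀ = 0 := Nat.eq_zero_of_not_pos h0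
      have := ht₀; rw [h1] at this
      simp [h0, ← hf0, this]

theorem infinite_mul_finite_is_infinite {m s k n : ℕ} (E : Encoder m s k n)
    (M₀ M : Pauli m) (h₀ : ¬ finiteMemory E M₀) (h : finiteMemory E M) :
    ¬ finiteMemory E (M₀ + M) := by
  intro hfm
  apply h₀
  obtain ⟨f, hf, hf0, t₁, ht₁⟩ := finiteMemory_ext E hfm
  obtain ⟨g, hg, hg0, t₂, ht₂⟩ := finiteMemory_ext E h
  refine ⟨f - g, stdPath_sub E hf hg, ?_, max t₁ t₂, ?_⟩
  · simp [Pi.sub_apply, hf0, hg0]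
  · simp [Pi.sub_apply, ht₁ _ (le_max_left t₁ t₂), ht₂ _ (le_max_right t₁ t₂)]
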